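/- Let φ(t) = (t−1)^{2r}(t+α) t^{−r} and ψ(t) = (t−1)^{4r} t^{1−2r} with r ≥ 1 and α ≠ −1. If the first essential Puiseux coefficient C₁^{(1)} of the branch of (φ, ψ) at t = 1 vanishes (i.e. the singularity at t = 1 is more degenerate than generic), then α = 1. -/

import Mathlib

/-- Lemma 5.20: For `φ(t) = (t−1)^{2r}(t+α) t^{−r}` and
`ψ(t) = (t−1)^{4r} t^{1−2r}` with `r ≥ 1`, `α ≠ −1`: if the first essential Puiseux
coefficient of the branch at `t = 1` vanishes — i.e. with `α' = 1/(1+α)` the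
difference `ψ(1+τ) − (α'·φ(1+τ))²` vanishes to order ≥ 4r+2 at `τ = 0` — then
`α = 1`. -/
theorem first_puiseux_coefficient_vanishes (r : ℕ) (hr : 1 ≤ r) (α : ℂ) (hα : α ≠ -1)
    (φ ψ : ℂ → ℂ)
    (hφ : ∀ t : ℂ, φ t = (t - 1) ^ (2 * r) * (t + α) * t ^ (-(r : ℤ)))
    (hψ : ∀ t : ℂ, ψ t = (t - 1) ^ (4 * r) * t ^ ((1 : ℤ) - 2 * r))
    (hC1 : ∃ h : ℂ → ℂ, AnalyticAt ℂ h 0 ∧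
      ∀ᶠ τ in nhds (0 : ℂ),
        ψ (1 + τ) - ((1 / (1 + α)) * φ (1 + τ)) ^ 2 = τ ^ (4 * r + 2) * h τ) :
    α = 1 := by
  obtain ⟨h, hA, hev⟩ := hC1
  have hα1 : (1 : ℂ) + α ≠ 0 := by
    intro hc; apply hα; linear_combination hc
  set g : ℂ → ℂ := fun τ => (1 + τ) - (1 / (1 + α)) ^ 2 * (1 + α + τ) ^ 2 with hg
  set H : ℂ → ℂ := fun τ => (1 + τ) ^ (2 * r) * h τ with hH
  -- eventually 1 + τ ≠ 0
  have hne : ∀ᶠ τ in nhds (0 : ℂ), (1 : ℂ) + τ ≠ 0 := by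
    have : ContinuousAt (fun τ : ℂ => 1 + τ) 0 := by fun_prop
    have h1 : (fun τ : ℂ => 1 + τ) 0 ≠ 0 := by norm_num
    exact this.eventually_ne h1
  have key : ∀ᶠ τ in nhds (0 : ℂ), g τ = τ ^ 2 * H τ := by
    filter_upwards [hev, hne] with τ hEq hu
    rcases eq_or_ne τ 0 with rfl | hτ
    · simp only [hg, hH]
      field_simp
      ring
    · have hEq' : τ ^ (4 * r) * ((1 + τ) * ((1 + τ) ^ (2 * r))⁻¹)
          - ((1 / (1 + α)) * (τ ^ (2 * r) * (1 + τ + α) * ((1 + τ) ^ r)⁻¹)) ^ 2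
          = τ ^ (4 * r + 2) * h τ := by
        have e1 : ((1 : ℂ) + τ) ^ ((1 : ℤ) - 2 * r)
            = (1 + τ) * ((1 + τ) ^ (2 * r))⁻¹ := by
          rw [zpow_sub₀ hu, zpow_one,
            show ((2 : ℤ) * r) = ((2 * r : ℕ) : ℤ) by push_cast; ring, zpow_natCast]
          rw [div_eq_mul_inv]
        have e2 : ((1 : ℂ) + τ) ^ (-(r : ℤ)) = ((1 + τ) ^ r)⁻¹ := by
          rw [zpow_neg, zpow_natCast]
        have := hEq
        rw [hψ, hφ] at this
        simp only [add_sub_cancel_left] at this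
        rw [e1, e2] at this
        convert this using 3 <;> ring
      have hpow : ((1 : ℂ) + τ) ^ (2 * r) ≠ 0 := pow_ne_zero _ hu
      have hpow' : ((1 : ℂ) + τ) ^ r ≠ 0 := pow_ne_zero _ hu
      have hτp : τ ^ (4 * r) ≠ 0 := pow_ne_zero _ hτ
      -- multiply out
      apply mul_left_cancel₀ hτp
      have expand : τ ^ (4 * r) * g τ
          = (τ ^ (4 * r) * ((1 + τ) * ((1 + τ) ^ (2 * r))⁻¹)
            - ((1 / (1 + α)) * (τ ^ (2 * r) * (1 + τ + α) * ((1 + τ) ^ r)⁻¹)) ^ 2)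
            * (1 + τ) ^ (2 * r) := by
        simp only [hg]
        field_simp
        ring
      rw [expand, hEq']
      simp only [hH]
      ring
  -- derivatives agree
  have hder : deriv g 0 = deriv (fun τ => τ ^ 2 * H τ) 0 :=
    Filter.EventuallyEq.deriv_eq key
  -- deriv of g at 0
  have hg0 : HasDerivAt g (1 - (1 / (1 + α)) ^ 2 * (2 * (1 + α))) 0 := by
    have h1 : HasDerivAt (fun τ : ℂ => 1 + τ) 1 0 := by
      simpa using (hasDerivAt_id (0 : ℂ)).const_add 1
    have h2 : HasDerivAt (fun τ : ℂ => 1 + α + τ) 1 0 := by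
      simpa using (hasDerivAt_id (0 : ℂ)).const_add (1 + α)
    have h3 : HasDerivAt (fun τ : ℂ => (1 + α + τ) ^ 2) (2 * (1 + α + 0) ^ 1 * 1) 0 := by
      simpa using h2.fun_pow 2
    have h4 := h1.fun_sub (h3.const_mul ((1 / (1 + α)) ^ 2))
    convert h4 using 1
    all_goals first | rfl | (push_cast; ring)
  -- deriv of τ^2 * H at 0
  have hHd : DifferentiableAt ℂ H 0 := by
    apply DifferentiableAt.mul
    · fun_prop
    · exact hA.differentiableAt
  have hp : HasDerivAt (fun τ : ℂ => τ ^ 2) 0 0 := by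
    simpa using hasDerivAt_pow 2 (0 : ℂ)
  have hrhs : HasDerivAt (fun τ : ℂ => τ ^ 2 * H τ) 0 0 := by
    have := hp.fun_mul hHd.hasDerivAt
    simpa using this
  have : (1 : ℂ) - (1 / (1 + α)) ^ 2 * (2 * (1 + α)) = 0 := by
    rw [hg0.deriv] at hder
    rw [hrhs.deriv] at hder
    exact hder
  field_simp at this
  have h5 : (1 + α) * ((1 + α) - 2) = 0 := by linear_combination (1 + α) * this
  rcases mul_eq_zero.mp h5 with hc | hc
  · exact absurd hc hα1
  · linear_combination hc
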